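/- On ℓ∞ × ℓ¹ with weak symplectic form ω((q,p),(q',p')) = ⟨q,p'⟩ − ⟨q',p⟩, a smooth function h admits a Hamiltonian vector field if and only if the partial derivative ∂h/∂q ∈ (ℓ∞)* actually lies in ℓ¹ ⊆ (ℓ∞)*; in that case X_h(q,p) = (∂h/∂p, −∂h/∂q) with ∂h/∂p ∈ ℓ∞ = (ℓ¹)*. -/

import Mathlib

/-- The weak symplectic form `ω((q,p),(q',p')) = ⟨q,p'⟩ - ⟨q',p⟩` on `ℓ∞ × ℓ¹`. -/
noncomputable def wsf (a b : (lp (fun _ : ℕ => ℝ) ⊤) × (lp (fun _ : ℕ => ℝ) 1)) : ℝ :=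
  (∑' k : ℕ, a.1 k * b.2 k) - (∑' k : ℕ, b.1 k * a.2 k)

/-- Any continuous linear functional on `ℓ∞ × ℓ¹`, restricted to the `ℓ¹` factor, is
represented by the bounded sequence of its values on the coordinate vectors. -/
lemma key_hasSum (L : ((lp (fun _ : ℕ => ℝ) ⊤) × (lp (fun _ : ℕ => ℝ) 1)) →L[ℝ] ℝ)
    (w : lp (fun _ : ℕ => ℝ) 1) :
    HasSum (fun k : ℕ => w k * L (0, lp.single 1 k 1)) (L (0, w)) := by
  let L2 : (lp (fun _ : ℕ => ℝ) 1) →L[ℝ] ℝ :=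
    L.comp (ContinuousLinearMap.inr ℝ (lp (fun _ : ℕ => ℝ) ⊤) (lp (fun _ : ℕ => ℝ) 1))
  have hw : HasSum (fun k : ℕ => lp.single 1 k (w k)) w :=
    lp.hasSum_single (by norm_num) w
  have := hw.mapL L2
  have heq : ∀ k : ℕ, L2 (lp.single 1 k (w k)) = w k * L (0, lp.single 1 k 1) := by
    intro k
    have : lp.single (E := fun _ : ℕ => ℝ) 1 k (w k) = (w k) • lp.single 1 k 1 := by
      rw [← lp.single_smul]
      norm_num
    rw [this, map_smul]
    simp [L2, smul_eq_mul]
  simp only [heq] at this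
  exact this

theorem stmt14
    (h : (lp (fun _ : ℕ => ℝ) ⊤) × (lp (fun _ : ℕ => ℝ) 1) → ℝ)
    (hdiff : Differentiable ℝ h)
    (z : (lp (fun _ : ℕ => ℝ) ⊤) × (lp (fun _ : ℕ => ℝ) 1)) :
    ((∃ X, ∀ v, fderiv ℝ h z v = wsf X v) ↔
      ∃ a : lp (fun _ : ℕ => ℝ) 1, ∀ v : lp (fun _ : ℕ => ℝ) ⊤,
        fderiv ℝ h z (v, 0) = ∑' k : ℕ, a k * v k) ∧
    (∀ X, (∀ v, fderiv ℝ h z v = wsf X v) →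
      (∀ w : lp (fun _ : ℕ => ℝ) 1, fderiv ℝ h z (0, w) = ∑' k : ℕ, X.1 k * w k) ∧
      (∀ v : lp (fun _ : ℕ => ℝ) ⊤, fderiv ℝ h z (v, 0) = ∑' k : ℕ, -(X.2 k) * v k)) := by
  set L := fderiv ℝ h z with hL
  -- the computation on the `ℓ∞` factor, given a Hamiltonian vector field
  have hq : ∀ X, (∀ v, L v = wsf X v) →
      ∀ v : lp (fun _ : ℕ => ℝ) ⊤, L (v, 0) = ∑' k : ℕ, -(X.2 k) * v k := by
    intro X hX v
    rw [hX]
    show (∑' k : ℕ, X.1 k * (0 : lp (fun _ : ℕ => ℝ) 1) k)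
        - (∑' k : ℕ, v k * X.2 k) = _
    simp only [lp.coeFn_zero, Pi.zero_apply, mul_zero, tsum_zero, zero_sub]
    rw [← tsum_neg]
    exact tsum_congr fun k => by ring
  have hp : ∀ X, (∀ v, L v = wsf X v) →
      ∀ w : lp (fun _ : ℕ => ℝ) 1, L (0, w) = ∑' k : ℕ, X.1 k * w k := by
    intro X hX w
    rw [hX]
    show (∑' k : ℕ, X.1 k * w k)
        - (∑' k : ℕ, (0 : lp (fun _ : ℕ => ℝ) ⊤) k * X.2 k) = _
    simp only [lp.coeFn_zero, Pi.zero_apply, zero_mul, tsum_zero, sub_zero]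
  constructor
  · constructor
    · rintro ⟨X, hX⟩
      refine ⟨-X.2, fun v => ?_⟩
      rw [hq X hX v]
      exact tsum_congr fun k => by rw [lp.coeFn_neg]; rfl
    · rintro ⟨a, ha⟩
      -- the candidate `∂h/∂p` component
      have hbdd : Memℓp (fun k : ℕ => L (0, lp.single 1 k 1)) (⊤ : ENNReal) := by
        apply memℓp_infty
        refine ⟨‖L‖, ?_⟩
        rintro - ⟨k, rfl⟩
        calc ‖L (0, lp.single 1 k 1)‖ ≤ ‖L‖ * ‖((0, lp.single 1 k 1) :
              (lp (fun _ : ℕ => ℝ) ⊤) × (lp (fun _ : ℕ => ℝ) 1))‖ := L.le_opNorm _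
          _ ≤ ‖L‖ * 1 := by
              apply mul_le_mul_of_nonneg_left _ (norm_nonneg _)
              rw [Prod.norm_def]
              have : ‖lp.single (E := fun _ : ℕ => ℝ) 1 k ((fun _ : ℕ => (1:ℝ)) k)‖
                  = ‖(1 : ℝ)‖ := lp.norm_single (E := fun _ : ℕ => ℝ) (by norm_num) k (1:ℝ)
              simp only [norm_zero, norm_one] at this ⊢
              simp [this]
          _ = ‖L‖ := mul_one _
      set X1 : lp (fun _ : ℕ => ℝ) ⊤ := ⟨fun k : ℕ => L (0, lp.single 1 k 1), hbdd⟩ with hX1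
      refine ⟨(X1, -a), fun v => ?_⟩
      have hsplit : L v = L (v.1, 0) + L (0, v.2) := by
        rw [← map_add]
        congr 1
        simp
      rw [hsplit, ha v.1, ← (key_hasSum L v.2).tsum_eq]
      show _ = (∑' k : ℕ, X1 k * v.2 k) - (∑' k : ℕ, v.1 k * (-a) k)
      have h1 : (∑' k : ℕ, v.1 k * (-a) k) = -(∑' k : ℕ, a k * v.1 k) := by
        rw [← tsum_neg]
        exact tsum_congr fun k => by rw [lp.coeFn_neg]; show v.1 k * -(a k) = _; ring
      have h2 : (∑' k : ℕ, v.2 k * L (0, lp.single 1 k 1)) = ∑' k : ℕ, X1 k * v.2 k :=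
        tsum_congr fun k => mul_comm _ _
      rw [h1, h2]; ring
  · intro X hX
    exact ⟨hp X hX, hq X hX⟩
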